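/- Let F be a finite class of measurable functions with values in [0,D], f° ∈ F an anchor, and ρ a distribution. Then the local Rademacher complexity satisfies R_n^ρ({f ∈ F : ‖f − f°‖²_ρ ≤ r}) ≤ 2·max(√(r log|F|/n), D log|F|/n), and the right-hand side, as a function of r, is sub-root with positive fixed point r* = 2·max(D,2)·log|F|/n. -/

import Mathlib

open MeasureTheory Real

lemma aux_sinh {x : ℝ} (hx : 0 ≤ x) : Real.sinh x ≤ x * Real.cosh x := by
  have hmono : MonotoneOn (fun y : ℝ => y * Real.cosh y - Real.sinh y) (Set.Ici 0) := by
    apply monotoneOn_of_deriv_nonneg (convex_Ici 0)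
    · exact (((continuous_id.mul Real.continuous_cosh).sub Real.continuous_sinh)).continuousOn
    · apply Differentiable.differentiableOn
      exact (differentiable_id.mul Real.differentiable_cosh).sub Real.differentiable_sinh
    · intro y hy
      rw [interior_Ici] at hy
      have h : HasDerivAt (fun y : ℝ => y * Real.cosh y - Real.sinh y)
          (1 * Real.cosh y + y * Real.sinh y - Real.cosh y) y :=
        ((hasDerivAt_id y).mul (Real.hasDerivAt_cosh y)).sub (Real.hasDerivAt_sinh y)
      rw [h.deriv]
      have : 0 ≤ y * Real.sinh y := mul_nonneg hy.le (Real.sinh_nonneg_iff.2 hy.le)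
      linarith
  have := hmono (Set.mem_Ici.2 le_rfl) (Set.mem_Ici.2 hx) hx
  simpa using this

lemma aux_cosh_quad {t T : ℝ} (h : |t| ≤ T) : Real.cosh t ≤ 1 + t ^ 2 / 2 * Real.cosh T := by
  have h1 : Real.cosh t = 1 + 2 * Real.sinh (t / 2) ^ 2 := by
    have := Real.cosh_two_mul (t / 2)
    have h2 := Real.cosh_sq (t / 2)
    rw [show 2 * (t / 2) = t by ring] at this
    rw [this, h2]; ring
  have h2 : Real.sinh (t / 2) ^ 2 ≤ (t / 2) ^ 2 * Real.cosh (t / 2) ^ 2 := by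
    have habs : Real.sinh (|t| / 2) ≤ |t| / 2 * Real.cosh (|t| / 2) :=
      aux_sinh (by positivity)
    have hs : Real.sinh (t / 2) ^ 2 = Real.sinh (|t| / 2) ^ 2 := by
      rcases abs_cases t with ⟨he, _⟩ | ⟨he, _⟩ <;>
        rw [he] <;> rw [neg_div, Real.sinh_neg] <;> ring
    have hc : Real.cosh (t / 2) ^ 2 = Real.cosh (|t| / 2) ^ 2 := by
      rcases abs_cases t with ⟨he, _⟩ | ⟨he, _⟩ <;>
        rw [he] <;> rw [neg_div, Real.cosh_neg]
    rw [hs, hc]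
    have hnn : 0 ≤ Real.sinh (|t| / 2) := Real.sinh_nonneg_iff.2 (by positivity)
    have : Real.sinh (|t| / 2) ^ 2 ≤ (|t| / 2 * Real.cosh (|t| / 2)) ^ 2 := by
      apply sq_le_sq' <;> nlinarith
    calc Real.sinh (|t| / 2) ^ 2 ≤ (|t| / 2 * Real.cosh (|t| / 2)) ^ 2 := this
      _ = (|t| / 2) ^ 2 * Real.cosh (|t| / 2) ^ 2 := by ring
      _ = (t / 2) ^ 2 * Real.cosh (|t| / 2) ^ 2 := by rcases abs_cases t with ⟨he, _⟩ | ⟨he, _⟩ <;> rw [he] <;> ring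
  have h3 : Real.cosh (t / 2) ^ 2 ≤ Real.cosh t := by
    have := Real.cosh_two_mul (t / 2)
    rw [show 2 * (t / 2) = t by ring] at this
    nlinarith [sq_nonneg (Real.sinh (t / 2))]
  have h4 : Real.cosh t ≤ Real.cosh T := by
    rw [Real.cosh_le_cosh]
    calc |t| ≤ T := h
      _ ≤ |T| := le_abs_self T
  nlinarith [Real.cosh_pos t, Real.cosh_pos (t/2), sq_nonneg (t/2)]

lemma aux_cosh_54 : Real.cosh (5 / 4 : ℝ) ≤ 2 := by
  rw [Real.cosh_eq]
  have h1 : Real.exp (5 / 4 : ℝ) ≤ 3.5 := by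
    have h4 : Real.exp (5 / 4 : ℝ) ^ 4 = Real.exp 1 ^ 5 := by
      rw [← Real.exp_nat_mul, ← Real.exp_nat_mul]; norm_num
    have h5 : Real.exp 1 ^ 5 ≤ 2.7182818286 ^ 5 := by
      apply pow_le_pow_left₀ (Real.exp_pos 1).le Real.exp_one_lt_d9.le
    have h6 : Real.exp (5 / 4 : ℝ) ^ 4 ≤ 3.5 ^ 4 := by
      rw [h4]; calc Real.exp 1 ^ 5 ≤ 2.7182818286 ^ 5 := h5
        _ ≤ (3.5:ℝ) ^ 4 := by norm_num
    exact le_of_pow_le_pow_left₀ (by norm_num) (by norm_num) h6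
  have h2 : Real.exp (-(5 / 4) : ℝ) ≤ 0.5 := by
    rw [Real.exp_neg]
    have : (2:ℝ) ≤ Real.exp (5/4) := by
      have := Real.add_one_le_exp (5/4 : ℝ); linarith
    rw [inv_le_comm₀ ((by linarith : (0:ℝ) < 2).trans_le this) (by norm_num)]
    linarith
  linarith

open MeasureTheory Real

lemma integ_bdd {α : Type*} [MeasurableSpace α] (μ : Measure α) [IsFiniteMeasure μ]
    {f : α → ℝ} (hf : Measurable f) (C : ℝ) (h : ∀ x, |f x| ≤ C) : Integrable f μ :=
  (integrable_const C).mono' hf.aestronglyMeasurable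
    (ae_of_all _ (by simpa [Real.norm_eq_abs] using h))

set_option maxHeartbeats 1000000 in
lemma master {𝒳 : Type*} [MeasurableSpace 𝒳] (ρ : Measure 𝒳) [IsProbabilityMeasure ρ]
    {ι : Type*} (s : Finset ι) (hs : s.Nonempty) (g : ι → 𝒳 → ℝ)
    (D r : ℝ) (hD : 0 < D) (hr : 0 ≤ r)
    (hgmeas : ∀ i ∈ s, Measurable (g i))
    (hbdd : ∀ i ∈ s, ∀ x, |g i x| ≤ D)
    (hvar : ∀ i ∈ s, (∫ x, (g i x) ^ 2 ∂ρ) ≤ r)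
    (n : ℕ) (hn : 0 < n) (l : ℝ) (hl : 0 < l) :
    (∫ X : Fin n → 𝒳, ((1 / 2 ^ n : ℝ) * ∑ σ : Fin n → Bool,
        s.sup' hs (fun i => (1 / n : ℝ) * ∑ k, (if σ k then (1 : ℝ) else -1) * g i (X k)))
      ∂(Measure.pi fun _ => ρ))
    ≤ Real.log s.card / l + l * Real.cosh (l * D / n) * r / (2 * n) := by
  letI : MeasureSpace 𝒳 := ⟨ρ⟩
  haveI : IsProbabilityMeasure (volume : Measure 𝒳) := ‹_›
  haveI : SigmaFinite (volume : Measure 𝒳) := inferInstance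
  set μ : Measure (Fin n → 𝒳) := Measure.pi fun _ => ρ with hμ
  haveI : IsProbabilityMeasure μ := by rw [hμ]; infer_instance
  have hn' : (0:ℝ) < n := by exact_mod_cast hn
  set c : ℝ := l / n with hc
  have hcpos : 0 < c := div_pos hl hn'
  set T : ℝ := l * D / n with hT
  have hTc : c * D = T := by rw [hc, hT]; ring
  have hT0 : 0 < T := by rw [← hTc]; positivity
  -- the empirical process
  set a : ι → (Fin n → 𝒳) → (Fin n → Bool) → ℝ :=
    fun i X σ => (1 / n : ℝ) * ∑ k, (if σ k then (1 : ℝ) else -1) * g i (X k) with ha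
  set Z : (Fin n → 𝒳) → ℝ :=
    fun X => (1 / 2 ^ n : ℝ) * ∑ σ : Fin n → Bool, s.sup' hs (fun i => a i X σ) with hZ
  -- bounds
  have habs_term : ∀ i ∈ s, ∀ (X : Fin n → 𝒳) (σ : Fin n → Bool) (k : Fin n),
      |(if σ k then (1:ℝ) else -1) * g i (X k)| ≤ D := by
    intro i hi X σ k
    rw [abs_mul]
    have : |(if σ k then (1:ℝ) else -1)| = 1 := by split <;> simp
    rw [this, one_mul]; exact hbdd i hi (X k)
  have habs_a : ∀ i ∈ s, ∀ X σ, |a i X σ| ≤ D := by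
    intro i hi X σ
    rw [ha]
    have h1 : |∑ k, (if σ k then (1:ℝ) else -1) * g i (X k)| ≤ ∑ k : Fin n, D :=
      (Finset.abs_sum_le_sum_abs _ _).trans
        (Finset.sum_le_sum fun k _ => habs_term i hi X σ k)
    simp only [Finset.sum_const, Finset.card_univ, Fintype.card_fin, nsmul_eq_mul] at h1
    rw [abs_mul, abs_of_nonneg (by positivity : (0:ℝ) ≤ (1 / n : ℝ))]
    calc (1 / n : ℝ) * |∑ k, (if σ k then (1:ℝ) else -1) * g i (X k)|
        ≤ (1 / n : ℝ) * (n * D) := by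
          apply mul_le_mul_of_nonneg_left h1 (by positivity)
      _ = D := by field_simp
  have hsup_bdd : ∀ X σ, |s.sup' hs (fun i => a i X σ)| ≤ D := by
    intro X σ
    rw [abs_le]
    constructor
    · obtain ⟨j, hj⟩ := hs
      calc -D ≤ a j X σ := (abs_le.1 (habs_a j hj X σ)).1
        _ ≤ _ := Finset.le_sup' (f := fun i => a i X σ) hj
    · exact Finset.sup'_le _ _ fun i hi => (abs_le.1 (habs_a i hi X σ)).2
  have hZ_bdd : ∀ X, |Z X| ≤ D := by
    intro X
    rw [hZ]
    have h1 : |∑ σ : Fin n → Bool, s.sup' hs (fun i => a i X σ)|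
        ≤ ∑ _σ : Fin n → Bool, D :=
      (Finset.abs_sum_le_sum_abs _ _).trans (Finset.sum_le_sum fun σ _ => hsup_bdd X σ)
    simp only [Finset.sum_const, Finset.card_univ] at h1
    rw [abs_mul, abs_of_nonneg (by positivity : (0:ℝ) ≤ (1 / 2 ^ n : ℝ))]
    have hcard : (Fintype.card (Fin n → Bool)) = 2 ^ n := by
      simp [Fintype.card_fun]
    rw [hcard] at h1
    calc (1 / 2 ^ n : ℝ) * |∑ σ : Fin n → Bool, s.sup' hs (fun i => a i X σ)|
        ≤ (1 / 2 ^ n : ℝ) * ((2 ^ n : ℕ) * D) := by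
          apply mul_le_mul_of_nonneg_left _ (by positivity)
          simpa [nsmul_eq_mul] using h1
      _ = D := by
          push_cast
          field_simp
  -- measurability
  have hameas : ∀ i ∈ s, ∀ σ, Measurable (fun X => a i X σ) := by
    intro i hi σ
    apply Measurable.const_mul
    exact Finset.measurable_sum _ fun k _ =>
      ((hgmeas i hi).comp (measurable_pi_apply k)).const_mul _
  have hsupmeas : ∀ σ : Fin n → Bool, Measurable (fun X => s.sup' hs (fun i => a i X σ)) := by
    intro σ
    have := Finset.measurable_sup' hs (f := fun i (X : Fin n → 𝒳) => a i X σ)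
      (fun i hi => hameas i hi σ)
    convert this using 1
    funext X
    exact (Finset.sup'_apply hs (fun i X => a i X σ) X).symm
  have hZmeas : Measurable Z := by
    rw [hZ]
    exact (Finset.measurable_sum _ fun σ _ => hsupmeas σ).const_mul _
  -- reduce goal to Z form
  suffices hsuff : (∫ X, Z X ∂μ) ≤ Real.log s.card / l + l * Real.cosh T * r / (2 * n) by
    simpa only [hZ, ha, hT] using hsuff
  -- integrability
  have hZint : Integrable Z μ := integ_bdd μ hZmeas D hZ_bdd
  have hexpZint : Integrable (fun X => Real.exp (l * Z X)) μ := by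
    apply integ_bdd μ ((hZmeas.const_mul l).exp) (Real.exp (l * D))
    intro X
    beta_reduce
    rw [abs_of_nonneg (Real.exp_pos _).le, Real.exp_le_exp]
    exact mul_le_mul_of_nonneg_left (abs_le.1 (hZ_bdd X)).2 hl.le
  have hexpint_X : ∀ i ∈ s, ∀ σ, Integrable (fun X => Real.exp (l * a i X σ)) μ := by
    intro i hi σ
    apply integ_bdd μ (((hameas i hi σ).const_mul l).exp) (Real.exp (l * D))
    intro X
    beta_reduce
    rw [abs_of_nonneg (Real.exp_pos _).le, Real.exp_le_exp]
    exact mul_le_mul_of_nonneg_left (abs_le.1 (habs_a i hi X σ)).2 hl.le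
  -- Jensen over X
  have jensen : Real.exp (l * ∫ X, Z X ∂μ) ≤ ∫ X, Real.exp (l * Z X) ∂μ := by
    have h := convexOn_exp.map_average_le continuous_exp.continuousOn isClosed_univ
      (f := fun X => l * Z X) (μ := μ) (ae_of_all _ fun X => Set.mem_univ _)
      (hZint.const_mul l) hexpZint
    rwa [average_eq_integral, average_eq_integral, integral_const_mul] at h
  -- finite Jensen over σ
  have hcard2 : ∑ _σ : Fin n → Bool, (1 / 2 ^ n : ℝ) = 1 := by
    simp only [Finset.sum_const, Finset.card_univ, Fintype.card_fun, Fintype.card_bool,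
      Fintype.card_fin, nsmul_eq_mul]
    push_cast
    field_simp
  have step2 : ∀ X, Real.exp (l * Z X) ≤
      (1 / 2 ^ n : ℝ) * ∑ σ : Fin n → Bool,
        Real.exp (l * s.sup' hs (fun i => a i X σ)) := by
    intro X
    have heq : l * Z X = ∑ σ : Fin n → Bool,
        (1 / 2 ^ n : ℝ) • (l * s.sup' hs fun i => a i X σ) := by
      rw [hZ]
      simp only [smul_eq_mul]
      rw [Finset.mul_sum, Finset.mul_sum]
      exact Finset.sum_congr rfl fun σ _ => by ring
    calc Real.exp (l * Z X)
        ≤ ∑ σ : Fin n → Bool, (1 / 2 ^ n : ℝ) •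
            Real.exp (l * s.sup' hs fun i => a i X σ) := by
          rw [heq]
          exact convexOn_exp.map_sum_le (fun _ _ => by positivity) hcard2
            (fun _ _ => Set.mem_univ _)
      _ = (1 / 2 ^ n : ℝ) * ∑ σ : Fin n → Bool,
            Real.exp (l * s.sup' hs fun i => a i X σ) := by
          simp only [smul_eq_mul]
          rw [Finset.mul_sum]
  have step3 : ∀ (X : Fin n → 𝒳) (σ : Fin n → Bool),
      Real.exp (l * s.sup' hs (fun i => a i X σ)) ≤ ∑ i ∈ s, Real.exp (l * a i X σ) := by
    intro X σ
    obtain ⟨j, hj, hje⟩ := Finset.exists_mem_eq_sup' hs (fun i => a i X σ)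
    rw [hje]
    exact Finset.single_le_sum (f := fun i => Real.exp (l * a i X σ))
      (fun i _ => (Real.exp_pos _).le) hj
  -- per-coordinate MGF bound
  have hKbound : ∀ i ∈ s, (∫ x, Real.cosh (c * g i x) ∂ρ)
      ≤ Real.exp (c ^ 2 / 2 * Real.cosh T * r) := by
    intro i hi
    have hcoshT : (0:ℝ) < Real.cosh T := Real.cosh_pos T
    have hptw : ∀ x, Real.cosh (c * g i x) ≤ 1 + c ^ 2 / 2 * Real.cosh T * g i x ^ 2 := by
      intro x
      have habs : |c * g i x| ≤ T := by
        rw [abs_mul, abs_of_nonneg hcpos.le, ← hTc]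
        exact mul_le_mul_of_nonneg_left (hbdd i hi x) hcpos.le
      calc Real.cosh (c * g i x) ≤ 1 + (c * g i x) ^ 2 / 2 * Real.cosh T := aux_cosh_quad habs
        _ = 1 + c ^ 2 / 2 * Real.cosh T * g i x ^ 2 := by ring
    have hint1 : Integrable (fun x => Real.cosh (c * g i x)) ρ := by
      apply integ_bdd ρ ((hgmeas i hi).const_mul c).cosh (Real.cosh T)
      intro x
      beta_reduce
      rw [abs_of_nonneg (Real.cosh_pos _).le, Real.cosh_le_cosh]
      calc |c * g i x| ≤ T := by
            rw [abs_mul, abs_of_nonneg hcpos.le, ← hTc]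
            exact mul_le_mul_of_nonneg_left (hbdd i hi x) hcpos.le
        _ ≤ |T| := le_abs_self T
    have hint2a : Integrable (fun x => g i x ^ 2) ρ := by
      apply integ_bdd ρ ((hgmeas i hi).pow_const 2) (D ^ 2)
      intro x
      beta_reduce
      rw [abs_of_nonneg (sq_nonneg _), ← sq_abs]
      exact pow_le_pow_left₀ (abs_nonneg _) (hbdd i hi x) 2
    have hA : (0:ℝ) ≤ c ^ 2 / 2 * Real.cosh T := by positivity
    calc (∫ x, Real.cosh (c * g i x) ∂ρ)
        ≤ ∫ x, (1 + c ^ 2 / 2 * Real.cosh T * g i x ^ 2) ∂ρ := by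
          apply integral_mono hint1 ((integrable_const 1).add (hint2a.const_mul _)) hptw
      _ = 1 + c ^ 2 / 2 * Real.cosh T * ∫ x, g i x ^ 2 ∂ρ := by
          rw [integral_add (integrable_const 1) (hint2a.const_mul _), integral_const,
            integral_const_mul]
          simp
      _ ≤ 1 + c ^ 2 / 2 * Real.cosh T * r :=
          add_le_add_right (mul_le_mul_of_nonneg_left (hvar i hi) hA) 1
      _ ≤ Real.exp (c ^ 2 / 2 * Real.cosh T * r) := by
          have := Real.add_one_le_exp (c ^ 2 / 2 * Real.cosh T * r)
          linarith
  -- exact computation of the mixed MGF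
  have hμvol : μ = (volume : Measure (Fin n → 𝒳)) := by
    rw [hμ]
    exact (MeasureTheory.volume_pi).symm
  have hKey : ∀ i ∈ s, ((1 / 2 ^ n : ℝ) * ∑ σ : Fin n → Bool, ∫ X, Real.exp (l * a i X σ) ∂μ)
      = (∫ x, Real.cosh (c * g i x) ∂ρ) ^ n := by
    intro i hi
    set φ : Bool → ℝ := fun b => ∫ x, Real.exp (c * (if b then (1:ℝ) else -1) * g i x) ∂ρ with hφ
    have hexpb : ∀ b : Bool, Integrable (fun x => Real.exp (c * (if b then (1:ℝ) else -1) * g i x)) ρ := by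
      intro b
      apply integ_bdd ρ ((hgmeas i hi).const_mul (c * (if b then (1:ℝ) else -1))).exp (Real.exp T)
      intro x
      beta_reduce
      rw [abs_of_nonneg (Real.exp_pos _).le, Real.exp_le_exp]
      calc c * (if b then (1:ℝ) else -1) * g i x ≤ |c * (if b then (1:ℝ) else -1) * g i x| :=
            le_abs_self _
        _ ≤ T := by
            rw [abs_mul, abs_mul, abs_of_nonneg hcpos.le]
            have h1 : |(if b then (1:ℝ) else -1)| = 1 := by split <;> simp
            rw [h1, mul_one, ← hTc]
            exact mul_le_mul_of_nonneg_left (hbdd i hi x) hcpos.le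
    have hfact : ∀ σ : Fin n → Bool, (∫ X, Real.exp (l * a i X σ) ∂μ) = ∏ k, φ (σ k) := by
      intro σ
      have heq : (fun X : Fin n → 𝒳 => Real.exp (l * a i X σ))
          = fun X => ∏ k, Real.exp (c * (if σ k then (1:ℝ) else -1) * g i (X k)) := by
        funext X
        rw [← Real.exp_sum]
        congr 1
        simp only [ha, hc]
        rw [Finset.mul_sum, Finset.mul_sum]
        exact Finset.sum_congr rfl fun k _ => by ring
      rw [heq, hμvol]
      exact MeasureTheory.integral_fintype_prod_eq_prod (ι := Fin n)
        (f := fun k x => Real.exp (c * (if σ k then (1:ℝ) else -1) * g i x))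
    have hswap : ∑ σ : Fin n → Bool, ∏ k, φ (σ k) = (φ true + φ false) ^ n := by
      have h := Finset.prod_univ_sum (fun _ : Fin n => (Finset.univ : Finset Bool))
        (fun _ b => φ b)
      rw [Fintype.piFinset_univ] at h
      rw [← h]
      simp [Fintype.sum_bool]
    have hI1 : Integrable (fun x => Real.exp (c * g i x)) ρ := by
      apply integ_bdd ρ ((hgmeas i hi).const_mul c).exp (Real.exp T)
      intro x
      beta_reduce
      rw [abs_of_nonneg (Real.exp_pos _).le, Real.exp_le_exp]
      calc c * g i x ≤ |c * g i x| := le_abs_self _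
        _ ≤ T := by
            rw [abs_mul, abs_of_nonneg hcpos.le, ← hTc]
            exact mul_le_mul_of_nonneg_left (hbdd i hi x) hcpos.le
    have hI2 : Integrable (fun x => Real.exp (-(c * g i x))) ρ := by
      apply integ_bdd ρ ((hgmeas i hi).const_mul c).neg.exp (Real.exp T)
      intro x
      beta_reduce
      rw [abs_of_nonneg (Real.exp_pos _).le, Real.exp_le_exp]
      calc -(c * g i x) ≤ |c * g i x| := neg_le_abs _
        _ ≤ T := by
            rw [abs_mul, abs_of_nonneg hcpos.le, ← hTc]
            exact mul_le_mul_of_nonneg_left (hbdd i hi x) hcpos.le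
    have hKeq : (φ true + φ false) / 2 = ∫ x, Real.cosh (c * g i x) ∂ρ := by
      have hφt : φ true = ∫ x, Real.exp (c * g i x) ∂ρ := by
        rw [hφ]
        simp
      have hφf : φ false = ∫ x, Real.exp (-(c * g i x)) ∂ρ := by
        rw [hφ]
        simp [mul_neg_one, neg_mul]
      rw [hφt, hφf, eq_comm]
      simp_rw [Real.cosh_eq]
      rw [MeasureTheory.integral_div, integral_add hI1 hI2]
    calc (1 / 2 ^ n : ℝ) * ∑ σ : Fin n → Bool, ∫ X, Real.exp (l * a i X σ) ∂μ
        = (1 / 2 ^ n : ℝ) * ∑ σ : Fin n → Bool, ∏ k, φ (σ k) := by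
          rw [Finset.sum_congr rfl fun σ _ => hfact σ]
      _ = (1 / 2 ^ n : ℝ) * (φ true + φ false) ^ n := by rw [hswap]
      _ = ((φ true + φ false) / 2) ^ n := by rw [div_pow]; ring
      _ = (∫ x, Real.cosh (c * g i x) ∂ρ) ^ n := by rw [hKeq]
  -- combine everything
  have main : (∫ X, Real.exp (l * Z X) ∂μ)
      ≤ (s.card : ℝ) * Real.exp (n * (c ^ 2 / 2 * Real.cosh T * r)) := by
    have hint_rhs : Integrable
        (fun X => (1 / 2 ^ n : ℝ) * ∑ σ : Fin n → Bool, ∑ i ∈ s, Real.exp (l * a i X σ)) μ := by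
      apply Integrable.const_mul
      exact integrable_finset_sum _ fun σ _ =>
        integrable_finset_sum _ fun i hi => hexpint_X i hi σ
    calc ∫ X, Real.exp (l * Z X) ∂μ
        ≤ ∫ X, ((1 / 2 ^ n : ℝ) * ∑ σ : Fin n → Bool, ∑ i ∈ s, Real.exp (l * a i X σ)) ∂μ := by
          apply integral_mono hexpZint hint_rhs
          intro X
          refine (step2 X).trans ?_
          exact mul_le_mul_of_nonneg_left (Finset.sum_le_sum fun σ _ => step3 X σ)
            (by positivity)
      _ = (1 / 2 ^ n : ℝ) * ∑ σ : Fin n → Bool, ∑ i ∈ s, ∫ X, Real.exp (l * a i X σ) ∂μ := by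
          rw [integral_const_mul]
          congr 1
          rw [integral_finset_sum _ (fun σ _ =>
            integrable_finset_sum _ fun i hi => hexpint_X i hi σ)]
          exact Finset.sum_congr rfl fun σ _ =>
            integral_finset_sum _ fun i hi => hexpint_X i hi σ
      _ = ∑ i ∈ s, ((1 / 2 ^ n : ℝ) * ∑ σ : Fin n → Bool, ∫ X, Real.exp (l * a i X σ) ∂μ) := by
          rw [Finset.sum_comm, Finset.mul_sum]
      _ = ∑ i ∈ s, (∫ x, Real.cosh (c * g i x) ∂ρ) ^ n := Finset.sum_congr rfl hKey
      _ ≤ ∑ i ∈ s, Real.exp (n * (c ^ 2 / 2 * Real.cosh T * r)) := by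
          apply Finset.sum_le_sum
          intro i hi
          have h0 : (0:ℝ) ≤ ∫ x, Real.cosh (c * g i x) ∂ρ :=
            integral_nonneg fun x => (Real.cosh_pos _).le
          calc (∫ x, Real.cosh (c * g i x) ∂ρ) ^ n
              ≤ Real.exp (c ^ 2 / 2 * Real.cosh T * r) ^ n :=
                pow_le_pow_left₀ h0 (hKbound i hi) n
            _ = Real.exp (n * (c ^ 2 / 2 * Real.cosh T * r)) := (Real.exp_nat_mul _ n).symm
      _ = (s.card : ℝ) * Real.exp (n * (c ^ 2 / 2 * Real.cosh T * r)) := by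
          rw [Finset.sum_const, nsmul_eq_mul]
  have hcard1 : (1:ℝ) ≤ (s.card : ℝ) := by exact_mod_cast hs.card_pos
  have hlog : l * (∫ X, Z X ∂μ) ≤ Real.log s.card + n * (c ^ 2 / 2 * Real.cosh T * r) := by
    have h2 := Real.log_le_log (Real.exp_pos _) (jensen.trans main)
    rwa [Real.log_exp, Real.log_mul (by linarith : (s.card:ℝ) ≠ 0) (Real.exp_ne_zero _),
      Real.log_exp] at h2
  have hfin : (∫ X, Z X ∂μ) ≤ (Real.log s.card + n * (c ^ 2 / 2 * Real.cosh T * r)) / l := by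
    rw [le_div_iff₀ hl]
    linarith
  refine hfin.trans (le_of_eq ?_)
  rw [hc]
  have hne : (n:ℝ) ≠ 0 := ne_of_gt hn'
  field_simp
set_option maxHeartbeats 1000000 in
theorem local_rademacher_finite_class {𝒳 : Type*} [MeasurableSpace 𝒳]
    (ρ : Measure 𝒳) [IsProbabilityMeasure ρ]
    (F : Finset (𝒳 → ℝ)) (hF : F.Nonempty) (D : ℝ) (hD : 0 < D)
    (hmeas : ∀ f ∈ F, Measurable f)
    (hrange : ∀ f ∈ F, ∀ x, f x ∈ Set.Icc 0 D)
    (f₀ : 𝒳 → ℝ) (hf₀ : f₀ ∈ F)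
    (n : ℕ) (hn : 0 < n) :
    (∀ r : ℝ, 0 ≤ r →
      (∫ X : Fin n → 𝒳, ((1 / 2 ^ n : ℝ) * ∑ σ : Fin n → Bool,
          sSup {v : ℝ | ∃ f ∈ F, (∫ x, (f x - f₀ x) ^ 2 ∂ρ) ≤ r ∧
            v = (1 / n : ℝ) * ∑ i, (if σ i then (1 : ℝ) else -1) * f (X i)})
        ∂(Measure.pi fun _ => ρ))
      ≤ 2 * max (Real.sqrt (r * Real.log F.card / n)) (D * Real.log F.card / n)) ∧
    (∀ r, 0 ≤ r →
      0 ≤ 2 * max (Real.sqrt (r * Real.log F.card / n)) (D * Real.log F.card / n)) ∧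
    MonotoneOn
      (fun r => 2 * max (Real.sqrt (r * Real.log F.card / n)) (D * Real.log F.card / n))
      (Set.Ici 0) ∧
    AntitoneOn
      (fun r => (2 * max (Real.sqrt (r * Real.log F.card / n))
          (D * Real.log F.card / n)) / Real.sqrt r)
      (Set.Ioi 0) ∧
    (2 * max (Real.sqrt ((2 * max D 2 * Real.log F.card / n) * Real.log F.card / n))
        (D * Real.log F.card / n)
      = 2 * max D 2 * Real.log F.card / n) := by
  classical
  have hN1 : 1 ≤ F.card := hF.card_pos
  have hL0 : (0:ℝ) ≤ Real.log F.card := Real.log_natCast_nonneg _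
  have hn' : (0:ℝ) < n := by exact_mod_cast hn
  set L : ℝ := Real.log F.card with hLdef
  refine ⟨?_, ?_, ?_, ?_, ?_⟩
  · -- main inequality
    intro r hr
    set Fr : Finset (𝒳 → ℝ) := F.filter (fun f => (∫ x, (f x - f₀ x) ^ 2 ∂ρ) ≤ r) with hFrdef
    have hf₀P : (∫ x, (f₀ x - f₀ x) ^ 2 ∂ρ) ≤ r := by simp [hr]
    have hf₀r : f₀ ∈ Fr := Finset.mem_filter.2 ⟨hf₀, hf₀P⟩
    have hFrne : Fr.Nonempty := ⟨f₀, hf₀r⟩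
    have hset : ∀ (X : Fin n → 𝒳) (σ : Fin n → Bool),
        {v : ℝ | ∃ f ∈ F, (∫ x, (f x - f₀ x) ^ 2 ∂ρ) ≤ r ∧
            v = (1 / n : ℝ) * ∑ i, (if σ i then (1 : ℝ) else -1) * f (X i)}
          = (fun f : 𝒳 → ℝ => (1 / n : ℝ) * ∑ i, (if σ i then (1 : ℝ) else -1) * f (X i)) '' (↑Fr : Set (𝒳 → ℝ)) := by
      intro X σ
      ext v
      simp only [Set.mem_setOf_eq, Set.mem_image, hFrdef, Finset.mem_coe, Finset.mem_filter]
      constructor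
      · rintro ⟨f, hf, hP, rfl⟩; exact ⟨f, ⟨hf, hP⟩, rfl⟩
      · rintro ⟨f, ⟨hf, hP⟩, rfl⟩; exact ⟨f, hf, hP, rfl⟩
    have hzero : ∀ k : Fin n, ∑ σ : Fin n → Bool, (if σ k then (1:ℝ) else -1) = 0 := by
      intro k
      let e : (Fin n → Bool) ≃ (Fin n → Bool) :=
        { toFun := fun σ => Function.update σ k (!σ k)
          invFun := fun σ => Function.update σ k (!σ k)
          left_inv := fun σ => by
            funext j
            rcases eq_or_ne j k with rfl | hj
            · simp
            · simp [Function.update_of_ne hj]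
          right_inv := fun σ => by
            funext j
            rcases eq_or_ne j k with rfl | hj
            · simp
            · simp [Function.update_of_ne hj] }
      have h := Equiv.sum_comp e (fun σ : Fin n → Bool => (if σ k then (1:ℝ) else -1))
      have h2 : ∀ σ : Fin n → Bool,
          (if (e σ) k then (1:ℝ) else -1) = -(if σ k then (1:ℝ) else -1) := by
        intro σ
        show (if (Function.update σ k (!σ k)) k then (1:ℝ) else -1) = _
        rw [Function.update_self]
        cases hσ : σ k <;> simp
      rw [Finset.sum_congr rfl (fun σ _ => h2 σ), Finset.sum_neg_distrib] at h
      linarith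
    have hinner : ∀ X : Fin n → 𝒳,
        ((1 / 2 ^ n : ℝ) * ∑ σ : Fin n → Bool,
          sSup {v : ℝ | ∃ f ∈ F, (∫ x, (f x - f₀ x) ^ 2 ∂ρ) ≤ r ∧
            v = (1 / n : ℝ) * ∑ i, (if σ i then (1 : ℝ) else -1) * f (X i)})
        = (1 / 2 ^ n : ℝ) * ∑ σ : Fin n → Bool,
            Fr.sup' hFrne (fun f => (1 / n : ℝ) *
              ∑ i, (if σ i then (1 : ℝ) else -1) * (f (X i) - f₀ (X i))) := by
      intro X
      have hident : ∀ (f : 𝒳 → ℝ) (σ : Fin n → Bool),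
          (1 / n : ℝ) * ∑ i, (if σ i then (1:ℝ) else -1) * f (X i)
          = ((1 / n : ℝ) * ∑ i, (if σ i then (1:ℝ) else -1) * (f (X i) - f₀ (X i)))
            + (1 / n : ℝ) * ∑ i, (if σ i then (1:ℝ) else -1) * f₀ (X i) := by
        intro f σ
        rw [← mul_add, ← Finset.sum_add_distrib]
        congr 1
        exact Finset.sum_congr rfl fun k _ => by ring
      have h1 : ∀ σ : Fin n → Bool,
          sSup {v : ℝ | ∃ f ∈ F, (∫ x, (f x - f₀ x) ^ 2 ∂ρ) ≤ r ∧
            v = (1 / n : ℝ) * ∑ i, (if σ i then (1 : ℝ) else -1) * f (X i)}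
          = Fr.sup' hFrne (fun f => (1 / n : ℝ) *
              ∑ i, (if σ i then (1 : ℝ) else -1) * f (X i)) := by
        intro σ
        rw [hset X σ]
        exact (Finset.sup'_eq_csSup_image Fr hFrne _).symm
      have h2 : ∀ σ : Fin n → Bool,
          Fr.sup' hFrne (fun f => (1 / n : ℝ) *
              ∑ i, (if σ i then (1 : ℝ) else -1) * f (X i))
          = Fr.sup' hFrne (fun f => (1 / n : ℝ) *
              ∑ i, (if σ i then (1 : ℝ) else -1) * (f (X i) - f₀ (X i)))
            + (1 / n : ℝ) * ∑ i, (if σ i then (1:ℝ) else -1) * f₀ (X i) := by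
        intro σ
        apply le_antisymm
        · apply Finset.sup'_le
          intro f hf
          rw [hident f σ]
          exact add_le_add_left (Finset.le_sup' (f := fun f => (1 / n : ℝ) *
            ∑ i, (if σ i then (1 : ℝ) else -1) * (f (X i) - f₀ (X i))) hf) _
        · obtain ⟨j, hj, hje⟩ := Finset.exists_mem_eq_sup' hFrne (fun f => (1 / n : ℝ) *
            ∑ i, (if σ i then (1 : ℝ) else -1) * (f (X i) - f₀ (X i)))
          rw [hje, ← hident j σ]
          exact Finset.le_sup' (f := fun f => (1 / n : ℝ) *
            ∑ i, (if σ i then (1 : ℝ) else -1) * f (X i)) hj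
      have hflipX : ∑ σ : Fin n → Bool,
          (1 / n : ℝ) * ∑ i, (if σ i then (1:ℝ) else -1) * f₀ (X i) = 0 := by
        rw [← Finset.mul_sum, Finset.sum_comm]
        have hz : ∀ k : Fin n,
            ∑ σ : Fin n → Bool, (if σ k then (1:ℝ) else -1) * f₀ (X k) = 0 := by
          intro k
          rw [← Finset.sum_mul, hzero k, zero_mul]
        rw [Finset.sum_congr rfl fun k _ => hz k, Finset.sum_const, smul_zero, mul_zero]
      rw [Finset.sum_congr rfl fun σ _ => (h1 σ).trans (h2 σ), Finset.sum_add_distrib,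
        hflipX, add_zero]
    refine le_trans (le_of_eq (integral_congr_ae (Filter.EventuallyEq.of_eq (funext hinner)))) ?_
    by_cases hcard : F.card = 1
    · -- trivial case: F = {f₀}
      obtain ⟨f1, hF1⟩ := Finset.card_eq_one.1 hcard
      have hf1 : f1 = f₀ := by
        have := hf₀
        rw [hF1, Finset.mem_singleton] at this
        exact this.symm
      have hFrsub : ∀ f ∈ Fr, f = f₀ := by
        intro f hf
        have := (Finset.mem_filter.1 hf).1
        rw [hF1, Finset.mem_singleton, hf1] at this
        exact this
      have hzero2 : ∀ X : Fin n → 𝒳, ((1 / 2 ^ n : ℝ) * ∑ σ : Fin n → Bool,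
          Fr.sup' hFrne (fun f => (1 / n : ℝ) *
            ∑ i, (if σ i then (1 : ℝ) else -1) * (f (X i) - f₀ (X i)))) = 0 := by
        intro X
        have : ∀ σ : Fin n → Bool, Fr.sup' hFrne (fun f => (1 / n : ℝ) *
            ∑ i, (if σ i then (1 : ℝ) else -1) * (f (X i) - f₀ (X i))) = 0 := by
          intro σ
          rw [Finset.sup'_congr hFrne rfl (g := fun _ => (0:ℝ)) ?_, Finset.sup'_const]
          intro f hf
          rw [hFrsub f hf]
          simp
        rw [Finset.sum_congr rfl fun σ _ => this σ, Finset.sum_const, smul_zero, mul_zero]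
      rw [show (fun X : Fin n → 𝒳 => ((1 / 2 ^ n : ℝ) * ∑ σ : Fin n → Bool,
          Fr.sup' hFrne (fun f => (1 / n : ℝ) *
            ∑ i, (if σ i then (1 : ℝ) else -1) * (f (X i) - f₀ (X i)))))
          = fun _ => (0:ℝ) from funext hzero2]
      rw [integral_const]
      simp only [smul_eq_mul, mul_zero, zero_mul]
      have h1 := Real.sqrt_nonneg (r * L / n)
      have h2 := le_max_left (Real.sqrt (r * L / n)) (D * L / n)
      linarith
    · -- nontrivial case
      have hN2 : 2 ≤ F.card := by omega
      have hL : 0 < L := by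
        rw [hLdef]
        apply Real.log_pos
        exact_mod_cast hN2
      have hgmeas' : ∀ f ∈ Fr, Measurable (fun x => f x - f₀ x) := fun f hf =>
        (hmeas f (Finset.mem_filter.1 hf).1).sub (hmeas f₀ hf₀)
      have hbdd' : ∀ f ∈ Fr, ∀ x, |f x - f₀ x| ≤ D := by
        intro f hf x
        have h1 := hrange f (Finset.mem_filter.1 hf).1 x
        have h2 := hrange f₀ hf₀ x
        rw [Set.mem_Icc] at h1 h2
        rw [abs_le]
        constructor <;> [linarith; linarith]
      have hvar' : ∀ f ∈ Fr, (∫ x, (f x - f₀ x) ^ 2 ∂ρ) ≤ r := fun f hf =>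
        (Finset.mem_filter.1 hf).2
      have hlogFr : Real.log (Fr.card : ℝ) ≤ L := by
        rw [hLdef]
        apply Real.log_le_log (by exact_mod_cast hFrne.card_pos)
        exact_mod_cast Finset.card_filter_le F _
      have happly : ∀ l : ℝ, 0 < l →
          (∫ X : Fin n → 𝒳, ((1 / 2 ^ n : ℝ) * ∑ σ : Fin n → Bool,
            Fr.sup' hFrne (fun f => (1 / n : ℝ) *
              ∑ i, (if σ i then (1 : ℝ) else -1) * (f (X i) - f₀ (X i))))
            ∂(Measure.pi fun _ => ρ))
          ≤ L / l + l * Real.cosh (l * D / n) * r / (2 * n) := by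
        intro l hl
        refine le_trans (master ρ Fr hFrne (fun f x => f x - f₀ x) D r hD hr
          hgmeas' hbdd' hvar' n hn l hl) ?_
        have h := (div_le_div_iff_of_pos_right hl).mpr hlogFr
        linarith
      by_cases hcase : D ^ 2 * L ≤ 25 / 16 * (n * r)
      · -- large r regime
        have hr0 : 0 < r := by nlinarith [pow_pos hD 2]
        set l : ℝ := Real.sqrt (n * L / r) with hldef
        have hlpos : 0 < l := Real.sqrt_pos.2 (by positivity)
        have hl2 : l ^ 2 = n * L / r := Real.sq_sqrt (by positivity)
        have hlD : l * D / n ≤ 5 / 4 := by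
          have h1 : (l * D / n) ^ 2 = D ^ 2 * L / (n * r) := by
            rw [show (l * D / (n:ℝ)) ^ 2 = l ^ 2 * D ^ 2 / n ^ 2 from by ring, hl2]
            field_simp
          have h2 : (l * D / n) ^ 2 ≤ (5 / 4) ^ 2 := by
            rw [h1, div_le_iff₀ (by positivity)]
            nlinarith
          nlinarith [div_nonneg (mul_nonneg hlpos.le hD.le) hn'.le]
        have hcosh : Real.cosh (l * D / n) ≤ 2 := by
          refine le_trans ?_ aux_cosh_54
          rw [Real.cosh_le_cosh, abs_of_nonneg (by positivity), abs_of_nonneg (by norm_num)]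
          exact hlD
        have hLne : L ≠ 0 := ne_of_gt hL
        have hrne : r ≠ 0 := ne_of_gt hr0
        have hnne : (n:ℝ) ≠ 0 := ne_of_gt hn'
        have hlne : l ≠ 0 := ne_of_gt hlpos
        have bound1 : L / l ≤ Real.sqrt (r * L / n) := by
          rw [Real.le_sqrt (by positivity) (by positivity), div_pow, hl2]
          rw [show L ^ 2 / ((n:ℝ) * L / r) = r * L / (n:ℝ) from by field_simp]
        have bound2 : l * r / n ≤ Real.sqrt (r * L / n) := by
          rw [Real.le_sqrt (by positivity) (by positivity)]
          rw [show (l * r / (n:ℝ)) ^ 2 = l ^ 2 * r ^ 2 / (n:ℝ) ^ 2 from by ring, hl2]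
          rw [show (n:ℝ) * L / r * r ^ 2 / (n:ℝ) ^ 2 = r * L / (n:ℝ) from by field_simp]
        have hterm : l * Real.cosh (l * D / n) * r / (2 * n) ≤ l * r / n := by
          rw [div_le_div_iff₀ (by positivity) (by positivity)]
          nlinarith [mul_nonneg (mul_nonneg hlpos.le hr0.le) hn'.le]
        refine (happly l hlpos).trans ?_
        have hmax := le_max_left (Real.sqrt (r * L / n)) (D * L / n)
        linarith
      · -- small r regime
        push_neg at hcase
        set l : ℝ := 5 * n / (4 * D) with hldef
        have hlpos : 0 < l := by positivity
        have hlD : l * D / n = 5 / 4 := by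
          rw [hldef]
          field_simp
        have hcosh : Real.cosh (l * D / n) ≤ 2 := by rw [hlD]; exact aux_cosh_54
        have hterm : l * Real.cosh (l * D / n) * r / (2 * n) ≤ l * r / n := by
          rw [div_le_div_iff₀ (by positivity) (by positivity)]
          nlinarith [mul_nonneg (mul_nonneg hlpos.le hr) hn'.le, Real.cosh_pos (l * D / (n:ℝ))]
        have e1 : L / l = 4 * D * L / (5 * n) := by
          rw [hldef]
          field_simp
        have e2 : l * r / n = 5 * r / (4 * D) := by
          rw [hldef]
          field_simp
        have hrle : 25 * ((n:ℝ) * r) < 16 * (D ^ 2 * L) := by nlinarith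
        have hnne : (n:ℝ) ≠ 0 := ne_of_gt hn'
        have hfinal : 4 * D * L / (5 * (n:ℝ)) + 5 * r / (4 * D) ≤ 2 * (D * L / n) := by
          have h5 : 5 * r / (4 * D) ≤ 6 * D * L / (5 * (n:ℝ)) := by
            rw [div_le_div_iff₀ (by positivity) (by positivity)]
            nlinarith
          have h6 : 4 * D * L / (5 * (n:ℝ)) + 6 * D * L / (5 * (n:ℝ)) = 2 * (D * L / n) := by
            field_simp
            ring
          linarith
        refine (happly l hlpos).trans ?_
        calc L / l + l * Real.cosh (l * D / n) * r / (2 * n)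
            ≤ L / l + l * r / n := by linarith
          _ = 4 * D * L / (5 * n) + 5 * r / (4 * D) := by rw [e1, e2]
          _ ≤ 2 * (D * L / n) := hfinal
          _ ≤ 2 * max (Real.sqrt (r * L / n)) (D * L / n) := by
              apply mul_le_mul_of_nonneg_left (le_max_right _ _) (by norm_num)
  · intro r _
    have h1 := Real.sqrt_nonneg (r * L / n)
    have h2 := le_max_left (Real.sqrt (r * L / n)) (D * L / n)
    linarith
  · intro x hx y hy hxy
    simp only
    apply mul_le_mul_of_nonneg_left _ (by norm_num)
    apply max_le_max _ le_rfl
    apply Real.sqrt_le_sqrt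
    exact (div_le_div_iff_of_pos_right hn').2 (mul_le_mul_of_nonneg_right hxy hL0)
  · intro x hx y hy hxy
    simp only
    rw [Set.mem_Ioi] at hx hy
    have key : ∀ z : ℝ, 0 < z → (2 * max (Real.sqrt (z * L / n)) (D * L / n)) / Real.sqrt z
        = 2 * max (Real.sqrt (L / n)) (D * L / n / Real.sqrt z) := by
      intro z hz
      have hsz : 0 < Real.sqrt z := Real.sqrt_pos.2 hz
      rw [mul_div_assoc, ← max_div_div_right hsz.le]
      congr 2
      rw [show z * L / n = z * (L / n) by ring, Real.sqrt_mul hz.le,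
        mul_div_cancel_left₀ _ hsz.ne']
    rw [key x hx, key y hy]
    apply mul_le_mul_of_nonneg_left _ (by norm_num)
    apply max_le_max le_rfl
    exact div_le_div_of_nonneg_left (by positivity) (Real.sqrt_pos.2 hx)
      (Real.sqrt_le_sqrt hxy)
  · set M : ℝ := max D 2 with hM
    have hM2 : (2:ℝ) ≤ M := le_max_right _ _
    have hDM : D ≤ M := le_max_left _ _
    have hLn : (0:ℝ) ≤ L / n := by positivity
    rw [show (2 * M * L / n) * L / n = (2 * M) * (L / n) ^ 2 by ring,
      Real.sqrt_mul (by linarith) ((L / n) ^ 2), Real.sqrt_sq hLn,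
      show D * L / n = D * (L / n) by ring, ← max_mul_of_nonneg _ _ hLn]
    have hs : Real.sqrt (2 * M) ≤ M := by
      have h := Real.sqrt_le_sqrt (show 2 * M ≤ M ^ 2 by nlinarith)
      rwa [Real.sqrt_sq (by linarith)] at h
    have h3 : max (Real.sqrt (2 * M)) D = M := by
      apply le_antisymm (max_le hs hDM)
      rcases le_total 2 D with h | h
      · have hMD : M = D := by rw [hM, max_eq_left h]
        rw [hMD]
        exact le_max_right _ _
      · have hM2' : M = 2 := by rw [hM, max_eq_right h]
        rw [hM2']
        have h4 : Real.sqrt ((2:ℝ) * 2) = 2 := by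
          rw [show (2:ℝ) * 2 = 2 ^ 2 by norm_num, Real.sqrt_sq (by norm_num)]
        rw [h4]
        exact le_max_left _ _
    rw [h3]
    ring
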